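/- Let A be a real m×n matrix and let M be the symmetric (m+n)×(m+n) block matrix M = [[ (1/μ) I_n , -Aᵀ ], [ -A , (1/τ) I_m ]] with μ, τ > 0. If μ τ ‖A‖² < 1 (operator 2-norm of A), then M is positive definite. -/

import Mathlib

open scoped BigOperators
open Matrix

lemma aux_key (μ τ N a b c p q : ℝ) (hμ : 0 < μ) (hτ : 0 < τ) (hN0 : 0 ≤ N)
    (ha0 : 0 ≤ a) (hb0 : 0 ≤ b) (hc1 : -(N * a * b) ≤ c) (hc2 : c ≤ N * a * b)
    (hp2 : p ^ 2 = μ) (hq2 : q ^ 2 = τ) (hp0 : 0 < p) (hq0 : 0 < q)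
    (hpqN : p * q * N < 1) (hab : 0 < a ∨ 0 < b) :
    0 < τ * a ^ 2 + μ * b ^ 2 - 2 * (μ * τ) * c := by
  subst hp2; subst hq2
  have hcc : 2 * (p ^ 2 * q ^ 2) * c ≤ 2 * (p ^ 2 * q ^ 2) * (N * a * b) :=
    mul_le_mul_of_nonneg_left hc2 (by positivity)
  have main : 0 < q ^ 2 * a ^ 2 + p ^ 2 * b ^ 2 - 2 * (p ^ 2 * q ^ 2) * (N * a * b) := by
    rcases hab with ha | hb'
    · rcases eq_or_lt_of_le hb0 with hbz | hbp
      · rw [← hbz]; ring_nf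
        nlinarith [mul_pos (mul_pos hq0 hq0) (mul_pos ha ha)]
      · nlinarith [sq_nonneg (q * a - p * b),
          mul_pos (mul_pos (mul_pos (mul_pos hp0 hq0) ha) hbp) (sub_pos.mpr hpqN)]
    · rcases eq_or_lt_of_le ha0 with haz | hap
      · rw [← haz]; ring_nf
        nlinarith [mul_pos (mul_pos hp0 hp0) (mul_pos hb' hb')]
      · nlinarith [sq_nonneg (q * a - p * b),
          mul_pos (mul_pos (mul_pos (mul_pos hp0 hq0) hap) hb') (sub_pos.mpr hpqN)]
  linarith

lemma aux_pqN (μ τ N p q : ℝ) (hN0 : 0 ≤ N) (hp2 : p ^ 2 = μ) (hq2 : q ^ 2 = τ)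
    (hp0 : 0 < p) (hq0 : 0 < q) (h : μ * τ * N ^ 2 < 1) : p * q * N < 1 := by
  have h1 : (p * q * N) ^ 2 < 1 := by
    calc (p * q * N) ^ 2 = μ * τ * N ^ 2 := by rw [← hp2, ← hq2]; ring
    _ < 1 := h
  nlinarith [mul_nonneg (mul_nonneg hp0.le hq0.le) hN0]

/-- The operator 2-norm (spectral norm) of a real `m × n` matrix. -/
noncomputable def opNorm {m n : ℕ} (A : Matrix (Fin m) (Fin n) ℝ) : ℝ :=
  ‖LinearMap.toContinuousLinearMap (Matrix.toEuclideanLin A)‖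

/-- If `μ, τ > 0` and `μ τ ‖A‖² < 1` (operator 2-norm), then the block matrix
`M = [[(1/μ) I, -Aᵀ], [-A, (1/τ) I]]` is positive definite. -/
theorem stmt2 {m n : ℕ} (A : Matrix (Fin m) (Fin n) ℝ) (μ τ : ℝ)
    (hμ : 0 < μ) (hτ : 0 < τ) (h : μ * τ * (opNorm A) ^ 2 < 1) :
    (Matrix.fromBlocks ((1 / μ) • (1 : Matrix (Fin n) (Fin n) ℝ)) (-A.transpose)
      (-A) ((1 / τ) • (1 : Matrix (Fin m) (Fin m) ℝ))).PosDef := by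
  rw [Matrix.posDef_iff_dotProduct_mulVec]
  constructor
  · simp [Matrix.IsHermitian, Matrix.fromBlocks_conjTranspose, Matrix.conjTranspose_smul,
      Matrix.fromBlocks_transpose]
  · intro x hx
    set u : Fin n → ℝ := x ∘ Sum.inl with hu
    set v : Fin m → ℝ := x ∘ Sum.inr with hv
    have hxe : x = Sum.elim u v := (Sum.elim_comp_inl_inr x).symm
    have hq : star x ⬝ᵥ ((Matrix.fromBlocks ((1 / μ) • (1 : Matrix (Fin n) (Fin n) ℝ)) (-A.transpose)
        (-A) ((1 / τ) • (1 : Matrix (Fin m) (Fin m) ℝ))) *ᵥ x)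
        = (1/μ) * (u ⬝ᵥ u) + (1/τ) * (v ⬝ᵥ v) - 2 * (v ⬝ᵥ (A *ᵥ u)) := by
      rw [hxe]
      simp [Matrix.fromBlocks_mulVec, sumElim_dotProduct_sumElim,
        dotProduct_add, Matrix.smul_mulVec, Matrix.mulVec_transpose,
        dotProduct_smul, dotProduct_neg, smul_eq_mul,
        Matrix.vecMul_neg, neg_dotProduct, Matrix.vecMul_transpose,
        Matrix.dotProduct_mulVec, Matrix.vecMul_smul, Matrix.vecMul_one, smul_dotProduct]
      rw [show A *ᵥ u ⬝ᵥ v = v ᵥ* A ⬝ᵥ u from by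
        rw [dotProduct_comm, Matrix.dotProduct_mulVec]]
      ring
    rw [hq]
    have hN0 : 0 ≤ opNorm A := norm_nonneg _
    set u' : EuclideanSpace ℝ (Fin n) := (WithLp.equiv 2 _).symm u with hu'
    set v' : EuclideanSpace ℝ (Fin m) := (WithLp.equiv 2 _).symm v with hv'
    have hS : u ⬝ᵥ u = ‖u'‖ ^ 2 := by
      rw [← real_inner_self_eq_norm_sq]
      rw [hu', PiLp.inner_apply]
      simp [RCLike.inner_apply, dotProduct, sq]
    have hT : v ⬝ᵥ v = ‖v'‖ ^ 2 := by
      rw [← real_inner_self_eq_norm_sq]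
      rw [hv', PiLp.inner_apply]
      simp [RCLike.inner_apply, dotProduct, sq]
    have hC : v ⬝ᵥ (A *ᵥ u) = inner ℝ (Matrix.toEuclideanLin A u') v' := by
      simp [Matrix.toEuclideanLin_apply, PiLp.inner_apply, RCLike.inner_apply,
        dotProduct, hu', hv', mul_comm]
    have hw : ‖Matrix.toEuclideanLin A u'‖ ≤ opNorm A * ‖u'‖ := by
      have := (LinearMap.toContinuousLinearMap (Matrix.toEuclideanLin A)).le_opNorm u'
      simpa [opNorm] using this
    have hb : |v ⬝ᵥ (A *ᵥ u)| ≤ opNorm A * ‖u'‖ * ‖v'‖ := by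
      rw [hC]
      calc |inner ℝ (Matrix.toEuclideanLin A u') v'|
          ≤ ‖Matrix.toEuclideanLin A u'‖ * ‖v'‖ := abs_real_inner_le_norm _ _
        _ ≤ opNorm A * ‖u'‖ * ‖v'‖ := mul_le_mul_of_nonneg_right hw (norm_nonneg _)
    have hc := abs_le.mp hb
    have hab : 0 < ‖u'‖ ∨ 0 < ‖v'‖ := by
      by_contra hcon
      push_neg at hcon
      have hu0 : u' = 0 := norm_eq_zero.mp (le_antisymm hcon.1 (norm_nonneg _))
      have hv0 : v' = 0 := norm_eq_zero.mp (le_antisymm hcon.2 (norm_nonneg _))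
      apply hx
      have hu0' : u = 0 := by
        have := congrArg (WithLp.equiv 2 (Fin n → ℝ)) hu0
        simpa [hu'] using this
      have hv0' : v = 0 := by
        have := congrArg (WithLp.equiv 2 (Fin m → ℝ)) hv0
        simpa [hv'] using this
      rw [hxe, hu0', hv0']
      ext i; cases i <;> simp
    have hp2 : (Real.sqrt μ) ^ 2 = μ := Real.sq_sqrt hμ.le
    have hq2 : (Real.sqrt τ) ^ 2 = τ := Real.sq_sqrt hτ.le
    have hp0 : 0 < Real.sqrt μ := Real.sqrt_pos.mpr hμ
    have hq0 : 0 < Real.sqrt τ := Real.sqrt_pos.mpr hτ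
    have hpqN : Real.sqrt μ * Real.sqrt τ * opNorm A < 1 :=
      aux_pqN μ τ (opNorm A) _ _ hN0 hp2 hq2 hp0 hq0 h
    have key := aux_key μ τ (opNorm A) ‖u'‖ ‖v'‖ (v ⬝ᵥ (A *ᵥ u)) (Real.sqrt μ) (Real.sqrt τ)
      hμ hτ hN0 (norm_nonneg _) (norm_nonneg _) hc.1 hc.2 hp2 hq2 hp0 hq0 hpqN hab
    rw [hS, hT]
    have hrw : 1 / μ * ‖u'‖ ^ 2 + 1 / τ * ‖v'‖ ^ 2 - 2 * (v ⬝ᵥ (A *ᵥ u))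
        = (τ * ‖u'‖ ^ 2 + μ * ‖v'‖ ^ 2 - 2 * (μ * τ) * (v ⬝ᵥ (A *ᵥ u))) / (μ * τ) := by
      field_simp
    rw [hrw]
    exact div_pos key (mul_pos hμ hτ)
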